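/- Uniqueness of the Bruhat decomposition: let X be an r×2m matrix and Y ∈ GL_r(F). Suppose m_1 ∈ GL_r(F), m_2 ∈ GL_{2m}(F), X' and X_1 are r×2m matrices, and Y' and Y_1 are r×r matrices such that ẇ_0^{-1} n(X,Y) = diag(m_1, m_2, θ_r(m_1)) · n(X',Y') · n̄(X_1,Y_1). Then necessarily m_1 = θ_r(Y), Y' = (−1)^r θ_r(Y)^{-1}, X' = (−1)^{r−1} θ_r(Y^{-1}) Y^{-1} X, Y_1 = (−1)^r Y^{-1}, X_1 = (−1)^r Y^{-1} X, the matrix S(X,Y) is invertible, and m_2 = S(X,Y)^{-1}. -/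

import Mathlib

open Matrix

namespace RS

variable (F : Type*) [Field F]

/-- The matrix `J_k`: its `(i, k+1-i)` entry (1-indexed) is `(-1)^(i-1)`, i.e. in 0-indexed
terms the `(i,j)` entry is `(-1)^i` when `i + j = k - 1`, and all other entries are `0`. -/
def Jmat (k : ℕ) : Matrix (Fin k) (Fin k) F :=
  Matrix.of fun i j => if (i : ℕ) + (j : ℕ) = k - 1 then (-1 : F) ^ (i : ℕ) else 0

/-- A 2×2 block matrix with blocks of sizes `a, b` (rows) and `c, d` (columns), realized on
`Fin (a+b) × Fin (c+d)`. -/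
def blk2 {a b c d : ℕ} (A : Matrix (Fin a) (Fin c) F) (B : Matrix (Fin a) (Fin d) F)
    (C : Matrix (Fin b) (Fin c) F) (D : Matrix (Fin b) (Fin d) F) :
    Matrix (Fin (a + b)) (Fin (c + d)) F :=
  Matrix.of fun i j =>
    if hi : (i : ℕ) < a then
      if hj : (j : ℕ) < c then A ⟨(i : ℕ), hi⟩ ⟨(j : ℕ), hj⟩
      else B ⟨(i : ℕ), hi⟩ ⟨(j : ℕ) - c, by have := j.isLt; omega⟩
    else
      if hj : (j : ℕ) < c then C ⟨(i : ℕ) - a, by have := i.isLt; omega⟩ ⟨(j : ℕ), hj⟩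
      else D ⟨(i : ℕ) - a, by have := i.isLt; omega⟩ ⟨(j : ℕ) - c, by have := j.isLt; omega⟩

/-- A 3×3 block (square) matrix with blocks of sizes `a, b, c`, realized on `Fin (a+b+c)`. -/
def blk3 {a b c : ℕ}
    (A11 : Matrix (Fin a) (Fin a) F) (A12 : Matrix (Fin a) (Fin b) F)
    (A13 : Matrix (Fin a) (Fin c) F)
    (A21 : Matrix (Fin b) (Fin a) F) (A22 : Matrix (Fin b) (Fin b) F)
    (A23 : Matrix (Fin b) (Fin c) F)
    (A31 : Matrix (Fin c) (Fin a) F) (A32 : Matrix (Fin c) (Fin b) F)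
    (A33 : Matrix (Fin c) (Fin c) F) :
    Matrix (Fin (a + b + c)) (Fin (a + b + c)) F :=
  Matrix.of fun i j =>
    if hi1 : (i : ℕ) < a then
      if hj1 : (j : ℕ) < a then A11 ⟨(i : ℕ), hi1⟩ ⟨(j : ℕ), hj1⟩
      else if hj2 : (j : ℕ) < a + b then A12 ⟨(i : ℕ), hi1⟩ ⟨(j : ℕ) - a, by omega⟩
      else A13 ⟨(i : ℕ), hi1⟩ ⟨(j : ℕ) - (a + b), by have := j.isLt; omega⟩
    else if hi2 : (i : ℕ) < a + b then
      if hj1 : (j : ℕ) < a then A21 ⟨(i : ℕ) - a, by omega⟩ ⟨(j : ℕ), hj1⟩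
      else if hj2 : (j : ℕ) < a + b then A22 ⟨(i : ℕ) - a, by omega⟩ ⟨(j : ℕ) - a, by omega⟩
      else A23 ⟨(i : ℕ) - a, by omega⟩ ⟨(j : ℕ) - (a + b), by have := j.isLt; omega⟩
    else
      if hj1 : (j : ℕ) < a then A31 ⟨(i : ℕ) - (a + b), by have := i.isLt; omega⟩ ⟨(j : ℕ), hj1⟩
      else if hj2 : (j : ℕ) < a + b then
        A32 ⟨(i : ℕ) - (a + b), by have := i.isLt; omega⟩ ⟨(j : ℕ) - a, by omega⟩
      else A33 ⟨(i : ℕ) - (a + b), by have := i.isLt; omega⟩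
        ⟨(j : ℕ) - (a + b), by have := j.isLt; omega⟩

/-- `J'_{2k}`, the `2k×2k` block matrix `[[0, J_k], [-J_kᵀ, 0]]`. -/
def Jp (k : ℕ) : Matrix (Fin (k + k)) (Fin (k + k)) F :=
  blk2 F 0 (Jmat F k) (-(Jmat F k)ᵀ) 0

/-- `Sp_{2N}(F) = {h ∈ GL_{2N}(F) : hᵀ J'_{2N} h = J'_{2N}}`. -/
def Sp (N : ℕ) : Set (Matrix (Fin (N + N)) (Fin (N + N)) F) :=
  {h | IsUnit h ∧ hᵀ * Jp F N * h = Jp F N}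

/-- `θ_r(g) = J_r (g⁻¹)ᵀ J_r⁻¹`. -/
noncomputable def theta (r : ℕ) (g : Matrix (Fin r) (Fin r) F) : Matrix (Fin r) (Fin r) F :=
  Jmat F r * (g⁻¹)ᵀ * (Jmat F r)⁻¹

/-- `θ_{r,m}(X) = (-1)^r J'_{2m} Xᵀ J_r`. -/
def thetaRM (r m : ℕ) (X : Matrix (Fin r) (Fin (m + m)) F) : Matrix (Fin (m + m)) (Fin r) F :=
  (-1 : F) ^ r • (Jp F m * Xᵀ * Jmat F r)

/-- `n(X,Y) = [[I_r, X, Y], [0, I_{2m}, θ_{r,m}(X)], [0, 0, I_r]]` (block sizes `r, 2m, r`). -/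
def nMat (r m : ℕ) (X : Matrix (Fin r) (Fin (m + m)) F) (Y : Matrix (Fin r) (Fin r) F) :
    Matrix (Fin (r + (m + m) + r)) (Fin (r + (m + m) + r)) F :=
  blk3 F 1 X Y 0 1 (thetaRM F r m X) 0 0 1

/-- `n̄(X,Y) = [[I_r, 0, 0], [(-1)^r J'_{2m} Xᵀ J_r, I_{2m}, 0], [(-1)^r Y, (-1)^r X, I_r]]`. -/
def nbarMat (r m : ℕ) (X : Matrix (Fin r) (Fin (m + m)) F) (Y : Matrix (Fin r) (Fin r) F) :
    Matrix (Fin (r + (m + m) + r)) (Fin (r + (m + m) + r)) F :=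
  blk3 F 1 0 0 ((-1 : F) ^ r • (Jp F m * Xᵀ * Jmat F r)) 1 0
    ((-1 : F) ^ r • Y) ((-1 : F) ^ r • X) 1

/-- `ẇ_0 = [[0, 0, I_r], [0, I_{2m}, 0], [(-1)^r I_r, 0, 0]]`. -/
def w0 (r m : ℕ) : Matrix (Fin (r + (m + m) + r)) (Fin (r + (m + m) + r)) F :=
  blk3 F 0 0 1 0 1 0 ((-1 : F) ^ r • (1 : Matrix (Fin r) (Fin r) F)) 0 0

/-- `S(X,Y) = I_{2m} - J'_{2m} Xᵀ (Y⁻¹)ᵀ J_r X`. -/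
noncomputable def Smat (r m : ℕ) (X : Matrix (Fin r) (Fin (m + m)) F) (Y : Matrix (Fin r) (Fin r) F) :
    Matrix (Fin (m + m)) (Fin (m + m)) F :=
  1 - Jp F m * Xᵀ * (Y⁻¹)ᵀ * Jmat F r * X

/-- The block diagonal matrix `diag(m₁, m₂, θ_r(m₁))`. -/
noncomputable def levi (r m : ℕ) (m1 : Matrix (Fin r) (Fin r) F)
    (m2 : Matrix (Fin (m + m)) (Fin (m + m)) F) :
    Matrix (Fin (r + (m + m) + r)) (Fin (r + (m + m) + r)) F :=
  blk3 F m1 0 0 0 m2 0 0 0 (theta F r m1)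

/-- `m(X,Y) = diag(θ_r(Y), S(X,Y)⁻¹, Y)`. -/
noncomputable def mMat (r m : ℕ) (X : Matrix (Fin r) (Fin (m + m)) F) (Y : Matrix (Fin r) (Fin r) F) :
    Matrix (Fin (r + (m + m) + r)) (Fin (r + (m + m) + r)) F :=
  blk3 F (theta F r Y) 0 0 0 (Smat F r m X Y)⁻¹ 0 0 0 Y

/-- `α^∨(t) = diag(t·I_r, I_{2m}, t⁻¹·I_r)`. -/
def coroot (r m : ℕ) (t : Fˣ) :
    Matrix (Fin (r + (m + m) + r)) (Fin (r + (m + m) + r)) F :=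
  blk3 F ((t : F) • (1 : Matrix (Fin r) (Fin r) F)) 0 0 0 1 0 0 0
    (((t⁻¹ : Fˣ) : F) • (1 : Matrix (Fin r) (Fin r) F))

/-- Transport of a `2n×2n` matrix written with block sizes `(r, 2m, r)` to the canonical
index type `Fin ((r+m)+(r+m))` (where `n = r + m`), along the obvious cast. -/
def toSp (r m : ℕ) (M : Matrix (Fin (r + (m + m) + r)) (Fin (r + (m + m) + r)) F) :
    Matrix (Fin ((r + m) + (r + m))) (Fin ((r + m) + (r + m))) F :=
  Matrix.reindex (finCongr (by omega)) (finCongr (by omega)) M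

/-- Upper-triangular unipotent matrices. -/
def UTU {k : ℕ} (u : Matrix (Fin k) (Fin k) F) : Prop :=
  (∀ i, u i i = 1) ∧ ∀ i j : Fin k, (j : ℕ) < (i : ℕ) → u i j = 0

/-- A row vector as a `1 × k` matrix. -/
def rowVec {k : ℕ} (v : Fin k → F) : Matrix (Fin 1) (Fin k) F := Matrix.of fun _ j => v j

/-- A column vector as a `k × 1` matrix. -/
def colVec {k : ℕ} (v : Fin k → F) : Matrix (Fin k) (Fin 1) F := Matrix.of fun i _ => v i

/-- A scalar as a `1 × 1` matrix. -/
def scMat (x : F) : Matrix (Fin 1) (Fin 1) F := Matrix.of fun _ _ => x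

/-- `Y_i`: the lower-left `i×i` corner submatrix of `Y` (rows `r-i+1,…,r`, columns `1,…,i`,
1-indexed). -/
def llCorner (r : ℕ) (Y : Matrix (Fin r) (Fin r) F) (i : ℕ) (h : i ≤ r) :
    Matrix (Fin i) (Fin i) F :=
  Matrix.of fun a b =>
    Y ⟨r - i + (a : ℕ), by have := a.isLt; omega⟩ ⟨(b : ℕ), by have := b.isLt; omega⟩

/-- `Y^{(r-1)}`: the upper-right `(r-1)×(r-1)` corner submatrix of `Y` (rows `1,…,r-1`,
columns `2,…,r`, 1-indexed). -/
def urCorner (r : ℕ) (Y : Matrix (Fin r) (Fin r) F) :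
    Matrix (Fin (r - 1)) (Fin (r - 1)) F :=
  Matrix.of fun a b =>
    Y ⟨(a : ℕ), by have := a.isLt; omega⟩ ⟨(b : ℕ) + 1, by have := b.isLt; omega⟩

/-- `J₀`: the central `(2m-2)×(2m-2)` submatrix of `J'_{2m}` (rows and columns `2,…,2m-1`). -/
def J0 (m : ℕ) : Matrix (Fin (m + m - 2)) (Fin (m + m - 2)) F :=
  Matrix.of fun i j =>
    Jp F m ⟨(i : ℕ) + 1, by have := i.isLt; omega⟩ ⟨(j : ℕ) + 1, by have := j.isLt; omega⟩

/-- `diag(t₁,…,t_n, t_n⁻¹,…,t₁⁻¹)` (with `n = r + m`), realized on the index type with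
block sizes `(r, 2m, r)`. -/
def torus (r m : ℕ) (t : Fin (r + m) → Fˣ) :
    Matrix (Fin (r + (m + m) + r)) (Fin (r + (m + m) + r)) F :=
  Matrix.diagonal fun i =>
    if h : (i : ℕ) < r + m then ((t ⟨(i : ℕ), h⟩ : Fˣ) : F)
    else (((t ⟨r + (m + m) + r - 1 - (i : ℕ), by have := i.isLt; omega⟩)⁻¹ : Fˣ) : F)

/-- `Y_{i,j}`: the `(j-1)×(j-1)` submatrix of `Y` on the rows `{r-j+1,…,r} \ {r-i+1}` and the
columns `1,…,j-1` (all 1-indexed). -/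
def subDelRow (r : ℕ) (Y : Matrix (Fin r) (Fin r) F) (i j : ℕ)
    (hi : 1 ≤ i) (hij : i < j) (hj : j ≤ r) : Matrix (Fin (j - 1)) (Fin (j - 1)) F :=
  Matrix.of fun a b =>
    Y (if h : r - j + (a : ℕ) < r - i then
          (⟨r - j + (a : ℕ), by have := a.isLt; omega⟩ : Fin r)
        else (⟨r - j + (a : ℕ) + 1, by have := a.isLt; omega⟩ : Fin r))
      ⟨(b : ℕ), by have := b.isLt; omega⟩

/-- `Y'_{i,j}`: the `(r-i)×(r-i)` submatrix of `Y` on the rows `i+1,…,r` and the columns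
`{1,…,r-i+1} \ {r-j+1}` (all 1-indexed). -/
def subDelCol (r : ℕ) (Y : Matrix (Fin r) (Fin r) F) (i j : ℕ)
    (hi : 1 ≤ i) (hij : i < j) (hj : j ≤ r) : Matrix (Fin (r - i)) (Fin (r - i)) F :=
  Matrix.of fun a b =>
    Y ⟨i + (a : ℕ), by have := a.isLt; omega⟩
      (if h : (b : ℕ) < r - j then (⟨(b : ℕ), by have := b.isLt; omega⟩ : Fin r)
        else (⟨(b : ℕ) + 1, by have := b.isLt; omega⟩ : Fin r))


set_option linter.unusedSectionVars false

section Infra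
variable {a b c : ℕ}
  {A11 : Matrix (Fin a) (Fin a) F} {A12 : Matrix (Fin a) (Fin b) F}
  {A13 : Matrix (Fin a) (Fin c) F}
  {A21 : Matrix (Fin b) (Fin a) F} {A22 : Matrix (Fin b) (Fin b) F}
  {A23 : Matrix (Fin b) (Fin c) F}
  {A31 : Matrix (Fin c) (Fin a) F} {A32 : Matrix (Fin c) (Fin b) F}
  {A33 : Matrix (Fin c) (Fin c) F}

abbrev em1 (a b c : ℕ) (i : Fin a) : Fin (a+b+c) := Fin.castAdd c (Fin.castAdd b i)
abbrev em2 (a b c : ℕ) (i : Fin b) : Fin (a+b+c) := Fin.castAdd c (Fin.natAdd a i)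
abbrev em3 (a b c : ℕ) (i : Fin c) : Fin (a+b+c) := Fin.natAdd (a+b) i

@[simp] lemma blk3_app11 (i j : Fin a) :
    blk3 F A11 A12 A13 A21 A22 A23 A31 A32 A33 (em1 a b c i) (em1 a b c j) = A11 i j := by
  simp only [blk3, em1, Matrix.of_apply, Fin.coe_castAdd, Fin.coe_natAdd]
  rw [dif_pos i.isLt, dif_pos j.isLt]

@[simp] lemma blk3_app12 (i : Fin a) (j : Fin b) :
    blk3 F A11 A12 A13 A21 A22 A23 A31 A32 A33 (em1 a b c i) (em2 a b c j) = A12 i j := by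
  simp only [blk3, em1, em2, Matrix.of_apply, Fin.coe_castAdd, Fin.coe_natAdd]
  rw [dif_pos i.isLt, dif_neg (by omega), dif_pos (by omega)]
  exact congrArg₂ A12 rfl (Fin.ext (by simp))

@[simp] lemma blk3_app13 (i : Fin a) (j : Fin c) :
    blk3 F A11 A12 A13 A21 A22 A23 A31 A32 A33 (em1 a b c i) (em3 a b c j) = A13 i j := by
  simp only [blk3, em1, em3, Matrix.of_apply, Fin.coe_castAdd, Fin.coe_natAdd]
  rw [dif_pos i.isLt, dif_neg (by omega), dif_neg (by omega)]
  exact congrArg₂ A13 rfl (Fin.ext (by simp))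

@[simp] lemma blk3_app21 (i : Fin b) (j : Fin a) :
    blk3 F A11 A12 A13 A21 A22 A23 A31 A32 A33 (em2 a b c i) (em1 a b c j) = A21 i j := by
  simp only [blk3, em1, em2, Matrix.of_apply, Fin.coe_castAdd, Fin.coe_natAdd]
  rw [dif_neg (by omega), dif_pos (by omega), dif_pos j.isLt]
  exact congrArg₂ A21 (Fin.ext (by simp)) rfl

@[simp] lemma blk3_app22 (i j : Fin b) :
    blk3 F A11 A12 A13 A21 A22 A23 A31 A32 A33 (em2 a b c i) (em2 a b c j) = A22 i j := by
  simp only [blk3, em2, Matrix.of_apply, Fin.coe_castAdd, Fin.coe_natAdd]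
  rw [dif_neg (by omega), dif_pos (by omega), dif_neg (by omega), dif_pos (by omega)]
  exact congrArg₂ A22 (Fin.ext (by simp)) (Fin.ext (by simp))

@[simp] lemma blk3_app23 (i : Fin b) (j : Fin c) :
    blk3 F A11 A12 A13 A21 A22 A23 A31 A32 A33 (em2 a b c i) (em3 a b c j) = A23 i j := by
  simp only [blk3, em2, em3, Matrix.of_apply, Fin.coe_castAdd, Fin.coe_natAdd]
  rw [dif_neg (by omega), dif_pos (by omega), dif_neg (by omega), dif_neg (by omega)]
  exact congrArg₂ A23 (Fin.ext (by simp)) (Fin.ext (by simp))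

@[simp] lemma blk3_app31 (i : Fin c) (j : Fin a) :
    blk3 F A11 A12 A13 A21 A22 A23 A31 A32 A33 (em3 a b c i) (em1 a b c j) = A31 i j := by
  simp only [blk3, em1, em3, Matrix.of_apply, Fin.coe_castAdd, Fin.coe_natAdd]
  rw [dif_neg (by omega), dif_neg (by omega), dif_pos j.isLt]
  exact congrArg₂ A31 (Fin.ext (by simp)) rfl

@[simp] lemma blk3_app32 (i : Fin c) (j : Fin b) :
    blk3 F A11 A12 A13 A21 A22 A23 A31 A32 A33 (em3 a b c i) (em2 a b c j) = A32 i j := by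
  simp only [blk3, em2, em3, Matrix.of_apply, Fin.coe_castAdd, Fin.coe_natAdd]
  rw [dif_neg (by omega), dif_neg (by omega), dif_neg (by omega), dif_pos (by omega)]
  exact congrArg₂ A32 (Fin.ext (by simp)) (Fin.ext (by simp))

@[simp] lemma blk3_app33 (i j : Fin c) :
    blk3 F A11 A12 A13 A21 A22 A23 A31 A32 A33 (em3 a b c i) (em3 a b c j) = A33 i j := by
  simp only [blk3, em3, Matrix.of_apply, Fin.coe_castAdd, Fin.coe_natAdd]
  rw [dif_neg (by omega), dif_neg (by omega), dif_neg (by omega), dif_neg (by omega)]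
  exact congrArg₂ A33 (Fin.ext (by simp)) (Fin.ext (by simp))

variable
  {B11 : Matrix (Fin a) (Fin a) F} {B12 : Matrix (Fin a) (Fin b) F}
  {B13 : Matrix (Fin a) (Fin c) F}
  {B21 : Matrix (Fin b) (Fin a) F} {B22 : Matrix (Fin b) (Fin b) F}
  {B23 : Matrix (Fin b) (Fin c) F}
  {B31 : Matrix (Fin c) (Fin a) F} {B32 : Matrix (Fin c) (Fin b) F}
  {B33 : Matrix (Fin c) (Fin c) F}

lemma blk3_ext_iff :
    blk3 F A11 A12 A13 A21 A22 A23 A31 A32 A33 = blk3 F B11 B12 B13 B21 B22 B23 B31 B32 B33 ↔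
    (A11 = B11 ∧ A12 = B12 ∧ A13 = B13 ∧ A21 = B21 ∧ A22 = B22 ∧ A23 = B23 ∧
      A31 = B31 ∧ A32 = B32 ∧ A33 = B33) := by
  constructor
  · intro h
    refine ⟨?_, ?_, ?_, ?_, ?_, ?_, ?_, ?_, ?_⟩ <;> ext i j
    · simpa using congrFun (congrFun h (em1 a b c i)) (em1 a b c j)
    · simpa using congrFun (congrFun h (em1 a b c i)) (em2 a b c j)
    · simpa using congrFun (congrFun h (em1 a b c i)) (em3 a b c j)
    · simpa using congrFun (congrFun h (em2 a b c i)) (em1 a b c j)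
    · simpa using congrFun (congrFun h (em2 a b c i)) (em2 a b c j)
    · simpa using congrFun (congrFun h (em2 a b c i)) (em3 a b c j)
    · simpa using congrFun (congrFun h (em3 a b c i)) (em1 a b c j)
    · simpa using congrFun (congrFun h (em3 a b c i)) (em2 a b c j)
    · simpa using congrFun (congrFun h (em3 a b c i)) (em3 a b c j)
  · rintro ⟨h1, h2, h3, h4, h5, h6, h7, h8, h9⟩
    rw [h1, h2, h3, h4, h5, h6, h7, h8, h9]

lemma blk3_mul :
    blk3 F A11 A12 A13 A21 A22 A23 A31 A32 A33 * blk3 F B11 B12 B13 B21 B22 B23 B31 B32 B33 =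
    blk3 F (A11*B11 + A12*B21 + A13*B31) (A11*B12 + A12*B22 + A13*B32) (A11*B13 + A12*B23 + A13*B33)
      (A21*B11 + A22*B21 + A23*B31) (A21*B12 + A22*B22 + A23*B32) (A21*B13 + A22*B23 + A23*B33)
      (A31*B11 + A32*B21 + A33*B31) (A31*B12 + A32*B22 + A33*B32) (A31*B13 + A32*B23 + A33*B33) := by
  ext i j
  refine Fin.addCases (fun i0 => Fin.addCases (fun i1 => ?_) (fun i1 => ?_) i0) (fun i0 => ?_) i <;>
  refine Fin.addCases (fun j0 => Fin.addCases (fun j1 => ?_) (fun j1 => ?_) j0) (fun j0 => ?_) j <;>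
  simp [Matrix.mul_apply, Fin.sum_univ_add, Matrix.add_apply, Finset.sum_add_distrib]

lemma blk3_one : blk3 F (1 : Matrix (Fin a) (Fin a) F) 0 0 0 (1 : Matrix (Fin b) (Fin b) F) 0 0 0
    (1 : Matrix (Fin c) (Fin c) F) = 1 := by
  ext i j
  refine Fin.addCases (fun i0 => Fin.addCases (fun i1 => ?_) (fun i1 => ?_) i0) (fun i0 => ?_) i <;>
  refine Fin.addCases (fun j0 => Fin.addCases (fun j1 => ?_) (fun j1 => ?_) j0) (fun j0 => ?_) j <;>
  simp [Matrix.one_apply, Fin.ext_iff] <;> first | omega | (split_ifs <;> first | rfl | omega)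

end Infra

section Jlemmas
variable {k : ℕ}

lemma neg_one_pow_self_mul (n : ℕ) : ((-1:F)^n) * ((-1:F)^n) = 1 := by
  rw [← pow_add]; exact Even.neg_one_pow ⟨n, rfl⟩

lemma Jmat_mul_Jmat : Jmat F k * Jmat F k = ((-1:F)^(k-1)) • (1 : Matrix (Fin k) (Fin k) F) := by
  ext i j
  have hik := i.isLt
  set l0 : Fin k := ⟨k-1-(i:ℕ), by omega⟩ with hl0def
  have hl0 : (l0:ℕ) = k-1-(i:ℕ) := rfl
  rw [Matrix.mul_apply]
  rw [Finset.sum_eq_single l0]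
  · simp only [Jmat, Matrix.of_apply, Matrix.smul_apply, Matrix.one_apply, smul_eq_mul]
    rw [if_pos (by omega : ((i:ℕ) + (l0:ℕ) = k-1))]
    by_cases h : i = j
    · subst h
      rw [if_pos (by omega), if_pos rfl, ← pow_add, mul_one]
      congr 1; omega
    · rw [if_neg (by rw [Fin.ext_iff] at h; omega), if_neg h, mul_zero, mul_zero]
  · intro l _ hl
    have hlv : (l:ℕ) ≠ (l0:ℕ) := fun hc => hl (Fin.ext hc)
    have hne : (i:ℕ) + (l:ℕ) ≠ k - 1 := by omega
    simp [Jmat, hne]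
  · intro h; exact absurd (Finset.mem_univ _) h

lemma Jmat_transpose : (Jmat F k)ᵀ = ((-1:F)^(k-1)) • Jmat F k := by
  ext i j
  simp only [Matrix.transpose_apply, Jmat, Matrix.of_apply, Matrix.smul_apply, smul_eq_mul]
  by_cases h : (j:ℕ) + (i:ℕ) = k - 1
  · have hik := i.isLt
    rw [if_pos h, if_pos (by omega)]
    have h2 : (-1:F)^(j:ℕ) * (-1)^(i:ℕ) = (-1)^(k-1) := by rw [← pow_add, h]
    rw [← h2, mul_assoc, neg_one_pow_self_mul, mul_one]
  · rw [if_neg h, if_neg (by omega), mul_zero]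

lemma Jmat_right_inv : Jmat F k * (((-1:F)^(k-1)) • Jmat F k) = 1 := by
  rw [mul_smul_comm, Jmat_mul_Jmat, smul_smul, neg_one_pow_self_mul, one_smul]

lemma Jmat_inv : (Jmat F k)⁻¹ = ((-1:F)^(k-1)) • Jmat F k :=
  Matrix.inv_eq_right_inv (Jmat_right_inv F)

lemma isUnit_Jmat : IsUnit (Jmat F k) :=
  (Matrix.isUnit_iff_isUnit_det _).mpr (Matrix.isUnit_det_of_right_inverse (Jmat_right_inv F))

lemma isUnit_Jmat_det : IsUnit (Jmat F k).det := (Matrix.isUnit_iff_isUnit_det _).mp (isUnit_Jmat F)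

lemma Jmat_mul_inv : Jmat F k * (Jmat F k)⁻¹ = 1 := Matrix.mul_nonsing_inv _ (isUnit_Jmat_det F)

lemma Jmat_inv_mul : (Jmat F k)⁻¹ * Jmat F k = 1 := Matrix.nonsing_inv_mul _ (isUnit_Jmat_det F)

lemma Jmat_inv_transpose : ((Jmat F k)⁻¹)ᵀ = Jmat F k := by
  rw [Jmat_inv, Matrix.transpose_smul, Jmat_transpose, smul_smul, neg_one_pow_self_mul, one_smul]

end Jlemmas

section ThetaLemmas
variable {r : ℕ} {g : Matrix (Fin r) (Fin r) F}

lemma isUnit_theta (hg : IsUnit g) : IsUnit (theta F r g) := by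
  have h1 : IsUnit ((g⁻¹)ᵀ : Matrix (Fin r) (Fin r) F) := by
    rw [Matrix.isUnit_iff_isUnit_det, Matrix.det_transpose, ← Matrix.isUnit_iff_isUnit_det,
      Matrix.isUnit_nonsing_inv_iff]
    exact hg
  have h2 : IsUnit ((Jmat F r)⁻¹) := by rw [Matrix.isUnit_nonsing_inv_iff]; exact isUnit_Jmat F
  exact ((isUnit_Jmat F).mul h1).mul h2

lemma theta_inv (hg : IsUnit g) : (theta F r g)⁻¹ = Jmat F r * gᵀ * (Jmat F r)⁻¹ := by
  have hgt : IsUnit (gᵀ).det := by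
    rw [Matrix.det_transpose]; exact (Matrix.isUnit_iff_isUnit_det _).mp hg
  unfold theta
  rw [Matrix.mul_inv_rev, Matrix.mul_inv_rev, Matrix.nonsing_inv_nonsing_inv _ (isUnit_Jmat_det F),
      Matrix.transpose_nonsing_inv, Matrix.nonsing_inv_nonsing_inv _ hgt, ← Matrix.mul_assoc]

lemma theta_of_inv (hg : IsUnit g) : theta F r g⁻¹ = Jmat F r * gᵀ * (Jmat F r)⁻¹ := by
  unfold theta
  rw [Matrix.nonsing_inv_nonsing_inv _ ((Matrix.isUnit_iff_isUnit_det _).mp hg)]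

lemma theta_theta (hg : IsUnit g) : theta F r (theta F r g) = g := by
  have h1 : (theta F r g)⁻¹ = Jmat F r * gᵀ * (Jmat F r)⁻¹ := theta_inv F hg
  rw [show theta F r (theta F r g) = Jmat F r * ((theta F r g)⁻¹)ᵀ * (Jmat F r)⁻¹ from rfl]
  rw [h1, Matrix.transpose_mul, Matrix.transpose_mul, Jmat_inv_transpose,
    Matrix.transpose_transpose, Jmat_transpose]
  -- goal: J * (J * (g * ((-1)^(r-1) • J))) * J⁻¹ = g  (roughly)
  simp only [mul_smul_comm, smul_mul_assoc]
  have hassoc : Jmat F r * (Jmat F r * (g * Jmat F r)) * (Jmat F r)⁻¹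
      = Jmat F r * Jmat F r * (g * (Jmat F r * (Jmat F r)⁻¹)) := by
    simp only [Matrix.mul_assoc]
  rw [hassoc, Jmat_mul_Jmat, Jmat_mul_inv, mul_one, smul_mul_assoc, one_mul, smul_smul,
    neg_one_pow_self_mul, one_smul]

end ThetaLemmas

/-- Uniqueness of the Bruhat decomposition. -/
theorem bruhat_decomposition_unique (r m : ℕ) (hr : 1 ≤ r) (hm : 1 ≤ m)
    (X : Matrix (Fin r) (Fin (m + m)) F) (Y : Matrix (Fin r) (Fin r) F) (hY : IsUnit Y)
    (m1 : Matrix (Fin r) (Fin r) F) (m2 : Matrix (Fin (m + m)) (Fin (m + m)) F)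
    (hm1 : IsUnit m1) (hm2 : IsUnit m2)
    (X' X1 : Matrix (Fin r) (Fin (m + m)) F) (Y' Y1 : Matrix (Fin r) (Fin r) F)
    (hdec : (w0 F r m)⁻¹ * nMat F r m X Y =
      levi F r m m1 m2 * nMat F r m X' Y' * nbarMat F r m X1 Y1) :
    m1 = theta F r Y ∧
    Y' = (-1 : F) ^ r • (theta F r Y)⁻¹ ∧
    X' = (-1 : F) ^ (r - 1) • (theta F r Y⁻¹ * (Y⁻¹ * X)) ∧
    Y1 = (-1 : F) ^ r • Y⁻¹ ∧
    X1 = (-1 : F) ^ r • (Y⁻¹ * X) ∧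
    IsUnit (Smat F r m X Y) ∧
    m2 = (Smat F r m X Y)⁻¹ := by
  classical
  have hε : ((-1:F)^r) * ((-1:F)^r) = 1 := neg_one_pow_self_mul F r
  have hWmul : (blk3 F 0 0 ((-1:F)^r • (1 : Matrix (Fin r) (Fin r) F)) 0 1 0 1 0 0) * w0 F r m
      = 1 := by
    simp only [w0]
    rw [blk3_mul, ← blk3_one F (a := r) (b := m + m) (c := r), blk3_ext_iff]
    refine ⟨?_, ?_, ?_, ?_, ?_, ?_, ?_, ?_, ?_⟩ <;>
      simp [smul_mul_assoc, mul_smul_comm, smul_smul, hε]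
  rw [Matrix.inv_eq_left_inv hWmul] at hdec
  simp only [nMat, nbarMat, levi] at hdec
  simp only [blk3_mul] at hdec
  simp only [Matrix.mul_zero, Matrix.zero_mul, Matrix.mul_one, Matrix.one_mul, mul_zero,
    zero_mul, mul_one, one_mul, add_zero, zero_add] at hdec
  rw [blk3_ext_iff] at hdec
  obtain ⟨e11, e12, e13, e21, e22, e23, e31, e32, e33⟩ := hdec
  clear e11 e21 e23
  have hYd : IsUnit Y.det := (Matrix.isUnit_iff_isUnit_det _).mp hY
  have hm1d : IsUnit m1.det := (Matrix.isUnit_iff_isUnit_det _).mp hm1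
  -- (1) m1
  have hm1Y : m1 = theta F r Y := by rw [e33, theta_theta F hm1]
  -- (2) Y'
  have hY' : Y' = (-1:F)^r • (theta F r Y)⁻¹ := by
    rw [← hm1Y]
    have h := congrArg (fun Z => m1⁻¹ * Z) e13.symm
    rw [← Matrix.mul_assoc, Matrix.nonsing_inv_mul _ hm1d, Matrix.one_mul, mul_smul_comm,
      Matrix.mul_one] at h
    exact h
  -- (4) Y1
  have h31 : Y * ((-1:F)^r • Y1) = 1 := by rw [e33]; exact e31.symm
  have hYinv : Y⁻¹ = (-1:F)^r • Y1 := Matrix.inv_eq_right_inv h31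
  have hY1 : Y1 = (-1:F)^r • Y⁻¹ := by rw [hYinv, smul_smul, hε, one_smul]
  -- (5) X1
  have hX1' : (-1:F)^r • X1 = Y⁻¹ * X := by
    rw [e32, ← e33, ← Matrix.mul_assoc, Matrix.nonsing_inv_mul _ hYd, Matrix.one_mul]
  have hX1 : X1 = (-1:F)^r • (Y⁻¹ * X) := by rw [← hX1', smul_smul, hε, one_smul]
  -- (3) X'
  have hs' : -((-1:F)^r) = (-1:F)^(r-1) := by
    have hpow : (-1:F)^r = (-1:F)^(r-1) * (-1) := by
      conv_lhs => rw [show r = (r-1)+1 by omega]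
      rw [pow_succ]
    rw [hpow]; ring
  have hm1inv : m1⁻¹ = theta F r Y⁻¹ := by
    rw [hm1Y, theta_inv F hY, ← theta_of_inv F hY]
  have hterm : m1 * Y' * ((-1:F)^r • X1) = X1 := by
    rw [← e13, Matrix.smul_mul, Matrix.one_mul, smul_smul, hε, one_smul]
  have hm1X' : m1 * X' = -X1 := by
    rw [hterm] at e12
    exact eq_neg_of_add_eq_zero_left e12.symm
  have h5 : X' = m1⁻¹ * (-X1) := by
    rw [← hm1X', ← Matrix.mul_assoc, Matrix.nonsing_inv_mul _ hm1d, Matrix.one_mul]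
  have hX' : X' = (-1:F)^(r-1) • (theta F r Y⁻¹ * (Y⁻¹ * X)) := by
    rw [h5, hm1inv, hX1, ← neg_smul, hs', Matrix.mul_smul]
  -- (6)(7) S and m2
  have hth : thetaRM F r m X' * ((-1:F)^r • X1)
      = -(Jp F m * Xᵀ * (Y⁻¹)ᵀ * Jmat F r * X) := by
    rw [hX1', hX', theta_of_inv F hY]
    simp only [thetaRM]
    simp only [Matrix.transpose_smul, Matrix.transpose_mul, Matrix.transpose_transpose,
      Jmat_inv_transpose, Jmat_transpose]
    simp only [Matrix.smul_mul, Matrix.mul_smul, smul_smul]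
    have hJJX : Jmat F r * (Jmat F r * (Y⁻¹ * X)) = (-1:F)^(r-1) • (Y⁻¹ * X) := by
      rw [← Matrix.mul_assoc, Jmat_mul_Jmat, Matrix.smul_mul, Matrix.one_mul]
    have hYYX : Y * (Y⁻¹ * X) = X := by
      rw [← Matrix.mul_assoc, Matrix.mul_nonsing_inv _ hYd, Matrix.one_mul]
    rw [show -(Jp F m * Xᵀ * (Y⁻¹)ᵀ * Jmat F r * X)
        = (-1 : F) • (Jp F m * Xᵀ * (Y⁻¹)ᵀ * Jmat F r * X) from (neg_one_smul _ _).symm]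
    simp only [Matrix.mul_assoc]
    rw [hJJX]
    simp only [Matrix.mul_smul, smul_smul]
    rw [hYYX]
    congr 1
    rw [← hs']
    linear_combination (-((-1:F)^r * (-1:F)^r + 1)) * hε
  have hm2S : m2 * Smat F r m X Y = 1 := by
    rw [Matrix.mul_assoc, hth, mul_neg] at e22
    unfold Smat
    rw [Matrix.mul_sub, Matrix.mul_one, sub_eq_add_neg]
    exact e22.symm
  have hSunit : IsUnit (Smat F r m X Y) :=
    (Matrix.isUnit_iff_isUnit_det _).mpr (Matrix.isUnit_det_of_left_inverse hm2S)
  have hm2eq : m2 = (Smat F r m X Y)⁻¹ := (Matrix.inv_eq_left_inv hm2S).symm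
  exact ⟨hm1Y, hY', hX', hY1, hX1, hSunit, hm2eq⟩

end RS
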